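/- arXiv:1511.08722 — 2 statements merged into one kernel-verified Lean document; each statement's English description precedes it below -/
import Mathlib

section
/- Let $m\in\mathbb{N}$ and $n\ge 3$. Define $p_{crit}(m,n)$ as the positive root of $\big((m+2)\frac{n}{2}-1\big)p^2+\big((m+2)(1-\frac{n}{2})-3\big)p-(m+2)=0$ and $p_{conf}(m,n)=\frac{(m+2)n+6}{(m+2)n-2}$. Then $p_{crit}(m,n)<p_{conf}(m,n)$. -/
/-- For `m ∈ ℕ` and `n ≥ 3`, the critical exponent (the positive root of its defining
quadratic) is strictly less than the conformal exponent `((m+2)n+6)/((m+2)n-2)`. -/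
theorem pcrit_lt_pconf (m n : ℕ) (hn : 3 ≤ n) (p : ℝ) (hp : 0 < p)
    (hroot : (((m : ℝ) + 2) * (n : ℝ) / 2 - 1) * p ^ 2
        + (((m : ℝ) + 2) * (1 - (n : ℝ) / 2) - 3) * p - ((m : ℝ) + 2) = 0) :
    p < (((m : ℝ) + 2) * (n : ℝ) + 6) / (((m : ℝ) + 2) * (n : ℝ) - 2) := by
  set A : ℝ := (m : ℝ) + 2 with hA
  have hAm : (0:ℝ) ≤ (m:ℝ) := Nat.cast_nonneg m
  have hA2 : (2:ℝ) ≤ A := by rw [hA]; linarith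
  have hn' : (3:ℝ) ≤ (n:ℝ) := by exact_mod_cast hn
  have hS : (6:ℝ) ≤ A * n := by nlinarith
  have hS2 : (0:ℝ) < A * n - 2 := by linarith
  have ha : (0:ℝ) < A * n / 2 - 1 := by nlinarith
  by_contra hcon
  push_neg at hcon
  set q : ℝ := (A * n + 6) / (A * n - 2) with hq
  have hqpos : 0 < q := by positivity
  have hfq : 0 < (A * n / 2 - 1) * q ^ 2 + (A * (1 - n / 2) - 3) * q - A := by
    have key : (A * n / 2 - 1) * q ^ 2 + (A * (1 - n / 2) - 3) * q - A
        = 8 * A / (A * n - 2) := by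
      rw [hq]
      field_simp
      ring
    rw [key]
    positivity
  have hab : 0 < (A * n / 2 - 1) * p + (A * (1 - n / 2) - 3) := by
    nlinarith [hroot, hp, hA2]
  nlinarith [hfq, hroot, mul_nonneg (sub_nonneg.2 hcon) hab.le,
    mul_nonneg (sub_nonneg.2 hcon) (mul_pos ha hqpos).le]
end

section
/- For every real $k>1/2$, it holds that $\frac{3k+4}{3k+2}<\frac{k+4+\sqrt{25k^2+48k+32}}{6k+4}<\frac{3k+5+\sqrt{9k^2+42k+33}}{6k+4}$. -/
/-- For every real `k > 1/2`:
`(3k+4)/(3k+2) < (k+4+√(25k²+48k+32))/(6k+4) < (3k+5+√(9k²+42k+33))/(6k+4)`. -/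
theorem pcrit_between (k : ℝ) (hk : 1 / 2 < k) :
    (3 * k + 4) / (3 * k + 2)
      < (k + 4 + Real.sqrt (25 * k ^ 2 + 48 * k + 32)) / (6 * k + 4) ∧
    (k + 4 + Real.sqrt (25 * k ^ 2 + 48 * k + 32)) / (6 * k + 4)
      < (3 * k + 5 + Real.sqrt (9 * k ^ 2 + 42 * k + 33)) / (6 * k + 4) := by
  have hA : (0:ℝ) ≤ 25 * k ^ 2 + 48 * k + 32 := by nlinarith
  have hB : (0:ℝ) ≤ 9 * k ^ 2 + 42 * k + 33 := by nlinarith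
  have hs := Real.sq_sqrt hA
  have ht := Real.sq_sqrt hB
  have hs0 := Real.sqrt_nonneg (25 * k ^ 2 + 48 * k + 32)
  have ht0 := Real.sqrt_nonneg (9 * k ^ 2 + 42 * k + 33)
  set s := Real.sqrt (25 * k ^ 2 + 48 * k + 32)
  set t := Real.sqrt (9 * k ^ 2 + 42 * k + 33)
  have hd1 : (0:ℝ) < 3 * k + 2 := by linarith
  have hd2 : (0:ℝ) < 6 * k + 4 := by linarith
  have hs1 : 5 * k + 4 < s := by nlinarith [sq_nonneg (s - (5 * k + 4))]
  have ht1 : 3 * k - 1 < t := by nlinarith [sq_nonneg (t - (3 * k - 1))]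
  constructor
  · rw [div_lt_div_iff₀ hd1 hd2]
    nlinarith
  · rw [div_lt_div_iff₀ hd2 hd2]
    have : s < 2 * k + 1 + t := by nlinarith
    nlinarith
end
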